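/- Let α ∈ (0,2) and ε > 0, and let ψ_ε : ℝ → ℝ be defined by ψ_ε(x) = |x| for |x| ≥ ε and ψ_ε(x) = 3ε/8 + (3/(4ε))x² − (1/(8ε³))x⁴ for |x| ≤ ε. Then for every r ≥ 0 one has 1 − (α/2) · r ψ_ε'(r) / ψ_ε(r) ≥ a, where a = (3/8) · min{1, 2 − α}. (Consequently, for the radial vector field H(x) = x on ℝ^N with weight w_ε(x) = ψ_ε(|x|)^α, the quantity 1 − (α/2) ψ_ε(|x|)^{−1} x·∇(ψ_ε∘|·|)(x) is bounded below by a at every x ∈ ℝ^N.) -/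

import Mathlib

/-- The regularized absolute value: `ψ_ε(x) = |x|` for `|x| ≥ ε` and
`ψ_ε(x) = 3ε/8 + (3/(4ε))x² - (1/(8ε³))x⁴` for `|x| ≤ ε`. -/
noncomputable def psi (ε : ℝ) (x : ℝ) : ℝ :=
  if ε ≤ |x| then |x| else 3 * ε / 8 + 3 / (4 * ε) * x ^ 2 - 1 / (8 * ε ^ 3) * x ^ 4

lemma psi_poly_hasDerivAt (ε r : ℝ) :
    HasDerivAt (fun x : ℝ => 3 * ε / 8 + 3 / (4 * ε) * x ^ 2 - 1 / (8 * ε ^ 3) * x ^ 4)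
      (3 / (2 * ε) * r - 1 / (2 * ε ^ 3) * r ^ 3) r := by
  have h2 : HasDerivAt (fun x : ℝ => 3 / (4 * ε) * x ^ 2) (3 / (4 * ε) * (2 * r ^ 1)) r :=
    (hasDerivAt_pow 2 r).const_mul _
  have h4 : HasDerivAt (fun x : ℝ => 1 / (8 * ε ^ 3) * x ^ 4) (1 / (8 * ε ^ 3) * (4 * r ^ 3)) r :=
    (hasDerivAt_pow 4 r).const_mul _
  have : HasDerivAt (fun x : ℝ => 3 * ε / 8 + 3 / (4 * ε) * x ^ 2 - 1 / (8 * ε ^ 3) * x ^ 4)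
      (3 / (4 * ε) * (2 * r ^ 1) - 1 / (8 * ε ^ 3) * (4 * r ^ 3)) r :=
    (h2.const_add (3 * ε / 8)).sub h4
  convert this using 1
  ring

/-- For every `r ≥ 0`, `1 - (α/2) · r ψ_ε'(r) / ψ_ε(r) ≥ (3/8) min{1, 2 - α}`. -/
theorem radial_multiplier_lower_bound (α ε : ℝ) (hα : α ∈ Set.Ioo (0 : ℝ) 2)
    (hε : 0 < ε) :
    ∀ r : ℝ, 0 ≤ r →
      1 - α / 2 * (r * deriv (psi ε) r / psi ε r) ≥ 3 / 8 * min 1 (2 - α) := by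
  obtain ⟨hα0, hα2⟩ := hα
  intro r hr
  -- final arithmetic reduction
  have hfin : ∀ q : ℝ, 0 ≤ q → q ≤ 1 → 1 - α / 2 * q ≥ 3 / 8 * min 1 (2 - α) := by
    intro q h0 h1
    rcases le_total (1 : ℝ) (2 - α) with h | h
    · rw [min_eq_left h]
      nlinarith [mul_nonneg hα0.le h0, mul_le_of_le_one_right hα0.le h1]
    · rw [min_eq_right h]
      nlinarith [mul_nonneg hα0.le h0, mul_le_of_le_one_right hα0.le h1]
  rcases lt_trichotomy r ε with hlt | heq | hgt
  · -- r < ε : polynomial branch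
    have hopen : ∀ᶠ x in nhds r, |x| < ε :=
      (isOpen_lt continuous_abs continuous_const).eventually_mem
        (by rwa [Set.mem_setOf_eq, abs_of_nonneg hr])
    have hev : psi ε =ᶠ[nhds r]
        (fun x : ℝ => 3 * ε / 8 + 3 / (4 * ε) * x ^ 2 - 1 / (8 * ε ^ 3) * x ^ 4) := by
      filter_upwards [hopen] with x hx
      rw [psi, if_neg (not_le.2 hx)]
    have hderiv : deriv (psi ε) r = 3 / (2 * ε) * r - 1 / (2 * ε ^ 3) * r ^ 3 := by
      rw [hev.deriv_eq, (psi_poly_hasDerivAt ε r).deriv]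
    have hif : ¬ ε ≤ |r| := by rw [abs_of_nonneg hr]; linarith
    have hpsi : psi ε r = 3 * ε / 8 + 3 / (4 * ε) * r ^ 2 - 1 / (8 * ε ^ 3) * r ^ 4 := by
      rw [psi, if_neg hif]
    rw [hderiv, hpsi]
    have h2 : r ^ 2 ≤ ε ^ 2 := by nlinarith
    have hr4 : r ^ 4 ≤ ε ^ 2 * r ^ 2 := by
      have := mul_le_mul_of_nonneg_right h2 (sq_nonneg r)
      nlinarith [this]
    have hDrw : 3 * ε / 8 + 3 / (4 * ε) * r ^ 2 - 1 / (8 * ε ^ 3) * r ^ 4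
        = (3 * ε ^ 4 + 6 * ε ^ 2 * r ^ 2 - r ^ 4) / (8 * ε ^ 3) := by
      field_simp; ring
    have hNrw : r * (3 / (2 * ε) * r - 1 / (2 * ε ^ 3) * r ^ 3)
        = (12 * ε ^ 2 * r ^ 2 - 4 * r ^ 4) / (8 * ε ^ 3) := by
      field_simp; ring
    have hc : (0:ℝ) < 8 * ε ^ 3 := by positivity
    have hBpos : (0:ℝ) < 3 * ε ^ 4 + 6 * ε ^ 2 * r ^ 2 - r ^ 4 := by
      nlinarith [pow_pos hε 4, mul_nonneg (sq_nonneg ε) (sq_nonneg r)]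
    have hD : 0 < (3 * ε ^ 4 + 6 * ε ^ 2 * r ^ 2 - r ^ 4) / (8 * ε ^ 3) :=
      div_pos hBpos hc
    rw [hNrw, hDrw]
    apply hfin
    · apply div_nonneg _ hD.le
      apply div_nonneg (by nlinarith) hc.le
    · rw [div_le_one hD, div_le_div_iff_of_pos_right hc]
      nlinarith [sq_nonneg (ε ^ 2 - r ^ 2)]
  · -- r = r : glue the two branches
    subst heq
    -- now r has been replaced by r, and hr : 0 < r
    have hrne : r ≠ 0 := hε.ne'
    have hifr : r ≤ |r| := by rw [abs_of_nonneg hr]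
    have hpsir : psi r r = r := by rw [psi, if_pos hifr, abs_of_nonneg hr]
    have hPr : 3 * r / 8 + 3 / (4 * r) * r ^ 2 - 1 / (8 * r ^ 3) * r ^ 4 = r := by
      field_simp; ring
    have hP : HasDerivAt
        (fun x : ℝ => 3 * r / 8 + 3 / (4 * r) * x ^ 2 - 1 / (8 * r ^ 3) * x ^ 4) 1 r := by
      have h := psi_poly_hasDerivAt r r
      have heq1 : 3 / (2 * r) * r - 1 / (2 * r ^ 3) * r ^ 3 = 1 := by field_simp; ring
      rwa [heq1] at h
    have hleft : HasDerivWithinAt (psi r) 1 (Set.Iic r) r := by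
      apply hP.hasDerivWithinAt.congr_of_eventuallyEq
      · have h1 : ∀ᶠ x in nhdsWithin r (Set.Iic r), -r < x :=
          eventually_nhdsWithin_of_eventually_nhds
            (eventually_gt_nhds (by linarith))
        filter_upwards [h1, eventually_mem_nhdsWithin] with x hx1 (hx2 : x ≤ r)
        rcases eq_or_lt_of_le hx2 with rfl | hx2
        · rw [hpsir, hPr]
        · have hxa : ¬ r ≤ |x| := not_le.2 (abs_lt.2 ⟨hx1, hx2⟩)
          rw [psi, if_neg hxa]
      · rw [hpsir, hPr]
    have hright : HasDerivWithinAt (psi r) 1 (Set.Ici r) r := by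
      apply (hasDerivAt_id r).hasDerivWithinAt.congr
      · intro y hy
        have hy' : r ≤ y := hy
        have hy0 : 0 ≤ y := le_trans hr hy'
        have : r ≤ |y| := by rwa [abs_of_nonneg hy0]
        rw [psi, if_pos this, abs_of_nonneg hy0]; rfl
      · rw [hpsir]; rfl
    have hder : HasDerivAt (psi r) 1 r := by
      have h := hleft.union hright
      rwa [Set.Iic_union_Ici, hasDerivWithinAt_univ] at h
    rw [hder.deriv, hpsir, mul_one, div_self hrne]
    exact hfin 1 zero_le_one le_rfl
  · -- r > ε : psi = id near r
    have hopen : ∀ᶠ x in nhds r, ε < x := eventually_gt_nhds hgt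
    have hev : psi ε =ᶠ[nhds r] id := by
      filter_upwards [hopen] with x hx
      have hx0 : 0 < x := lt_trans hε hx
      have h : ε ≤ |x| := by rw [abs_of_pos hx0]; exact hx.le
      rw [psi, if_pos h, abs_of_pos hx0]; rfl
    have hderiv : deriv (psi ε) r = 1 := by
      rw [hev.deriv_eq, deriv_id]
    have hr0 : 0 < r := lt_trans hε hgt
    have hpsir : psi ε r = r := by
      have h : ε ≤ |r| := by rw [abs_of_nonneg hr]; exact hgt.le
      rw [psi, if_pos h, abs_of_nonneg hr]
    rw [hderiv, hpsir, mul_one, div_self hr0.ne']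
    exact hfin 1 zero_le_one le_rfl
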